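/- For any symmetric positive semidefinite matrix M of the form [[(1/τ)I, −Gᵀ], [−G, (1/σ)I]] with τσ‖G‖² ≤ 1, the seminorm ‖z‖_M := √(zᵀMz) satisfies (1 − √(τσ)‖G‖)·‖z‖_N² ≤ ‖z‖_M² ≤ (1 + √(τσ)‖G‖)·‖z‖_N², where N = diag((1/τ)I, (1/σ)I). -/

import Mathlib

theorem stmt6 {n m : ℕ}
    (G : EuclideanSpace ℝ (Fin n) →L[ℝ] EuclideanSpace ℝ (Fin m))
    (τ σ : ℝ) (hτ : 0 < τ) (hσ : 0 < σ) (hstep : τ * σ * ‖G‖ ^ 2 ≤ 1) :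
    ∀ (x : EuclideanSpace ℝ (Fin n)) (y : EuclideanSpace ℝ (Fin m)),
      (1 - Real.sqrt (τ * σ) * ‖G‖) * ((1 / τ) * ‖x‖ ^ 2 + (1 / σ) * ‖y‖ ^ 2)
          ≤ (1 / τ) * ‖x‖ ^ 2 + (1 / σ) * ‖y‖ ^ 2 - 2 * (inner ℝ y (G x) : ℝ)
        ∧ (1 / τ) * ‖x‖ ^ 2 + (1 / σ) * ‖y‖ ^ 2 - 2 * (inner ℝ y (G x) : ℝ)
          ≤ (1 + Real.sqrt (τ * σ) * ‖G‖) * ((1 / τ) * ‖x‖ ^ 2 + (1 / σ) * ‖y‖ ^ 2) := by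
  intro x y
  have hG : 0 ≤ ‖G‖ := norm_nonneg _
  have h1 : |(inner ℝ y (G x) : ℝ)| ≤ ‖y‖ * (‖G‖ * ‖x‖) := by
    calc |(inner ℝ y (G x) : ℝ)| ≤ ‖y‖ * ‖G x‖ := abs_real_inner_le_norm y (G x)
    _ ≤ ‖y‖ * (‖G‖ * ‖x‖) := by
        exact mul_le_mul_of_nonneg_left (G.le_opNorm x) (norm_nonneg y)
  have hs : Real.sqrt (τ * σ) = Real.sqrt τ * Real.sqrt σ := Real.sqrt_mul hτ.le σ
  have hτ2 : Real.sqrt τ ^ 2 = τ := Real.sq_sqrt hτ.le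
  have hσ2 : Real.sqrt σ ^ 2 = σ := Real.sq_sqrt hσ.le
  have hτs : 0 < Real.sqrt τ := Real.sqrt_pos.mpr hτ
  have hσs : 0 < Real.sqrt σ := Real.sqrt_pos.mpr hσ
  -- key: 2‖x‖‖y‖ ≤ √(τσ)·((1/τ)‖x‖² + (1/σ)‖y‖²)
  have key : 2 * (‖x‖ * ‖y‖) ≤ Real.sqrt (τ * σ) * ((1 / τ) * ‖x‖ ^ 2 + (1 / σ) * ‖y‖ ^ 2) := by
    rw [show (1/τ) * ‖x‖^2 + (1/σ) * ‖y‖^2 = (σ * ‖x‖^2 + τ * ‖y‖^2)/(τ*σ) by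
      field_simp]
    rw [← mul_div_assoc, le_div_iff₀ (mul_pos hτ hσ)]
    have h := mul_nonneg (Real.sqrt_nonneg (τ*σ)) (sq_nonneg (Real.sqrt σ * ‖x‖ - Real.sqrt τ * ‖y‖))
    rw [hs] at h ⊢
    have expand : Real.sqrt τ * Real.sqrt σ * (Real.sqrt σ * ‖x‖ - Real.sqrt τ * ‖y‖)^2
        = Real.sqrt τ * Real.sqrt σ * (σ * ‖x‖^2 + τ * ‖y‖^2) - 2 * (τ*σ) * (‖x‖*‖y‖) := by
      linear_combination (Real.sqrt τ * Real.sqrt σ * ‖x‖^2 - 2*τ*‖x‖*‖y‖) * hσ2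
        + (Real.sqrt τ * Real.sqrt σ * ‖y‖^2 - 2*Real.sqrt σ^2*‖x‖*‖y‖) * hτ2
    rw [expand] at h
    linarith
  have h2 : 2 * |(inner ℝ y (G x) : ℝ)| ≤
      Real.sqrt (τ * σ) * ‖G‖ * ((1 / τ) * ‖x‖ ^ 2 + (1 / σ) * ‖y‖ ^ 2) := by
    nlinarith [abs_nonneg (inner ℝ y (G x) : ℝ), mul_le_mul_of_nonneg_left key hG,
      Real.sqrt_nonneg (τ * σ), sq_nonneg ‖x‖, sq_nonneg ‖y‖,
      mul_nonneg (mul_nonneg hG (norm_nonneg x)) (norm_nonneg y)]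
  have habs := abs_le.mp (le_refl |(inner ℝ y (G x) : ℝ)|) |> fun _ => ()
  have hle := le_abs_self (inner ℝ y (G x) : ℝ)
  have hge := neg_abs_le (inner ℝ y (G x) : ℝ)
  constructor <;> nlinarith [hle, hge, h2]
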